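/- The two-qubit state ω(π/4) (the Choi state of the selfcomplementary channel at θ = π/4, φ = 0) is separable; equivalently its partial transpose is positive semidefinite and, being a two-qubit state, it is therefore separable (PPT ⟺ separable in 2⊗2). Hence the corresponding channel is entanglement breaking. -/
import Mathlib


open Matrix Kronecker
open scoped ComplexOrder

noncomputable section

def idx (i k : Fin 2) : Fin 4 := ⟨2 * i.1 + k.1, by omega⟩

/-- `ω(θ)`: the Choi state of the single-qubit selfcomplementary channel with `φ = 0`. -/
def omg (θ : ℝ) : Matrix (Fin 2 × Fin 2) (Fin 2 × Fin 2) ℂ :=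
  Matrix.of fun p q =>
    ((1 / 2 : ℂ) •
      !![(Real.sin θ : ℂ) ^ 2, 0, 0, (((Real.sqrt 2)⁻¹ * Real.sin θ : ℝ) : ℂ);
         0, 1 / 2, (((Real.sqrt 2)⁻¹ * Real.cos θ : ℝ) : ℂ), 0;
         0, (((Real.sqrt 2)⁻¹ * Real.cos θ : ℝ) : ℂ), (Real.cos θ : ℂ) ^ 2, 0;
         (((Real.sqrt 2)⁻¹ * Real.sin θ : ℝ) : ℂ), 0, 0, 1 / 2])
      (idx p.1 p.2) (idx q.1 q.2)

/-- Partial transpose on the first factor. -/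
def ptA (ω : Matrix (Fin 2 × Fin 2) (Fin 2 × Fin 2) ℂ) :
    Matrix (Fin 2 × Fin 2) (Fin 2 × Fin 2) ℂ :=
  Matrix.of fun p q => ω (q.1, p.2) (p.1, q.2)

/-- A two-qubit state is separable if it is a convex combination of tensor products of
single-qubit states. -/
def SeparableState (ω : Matrix (Fin 2 × Fin 2) (Fin 2 × Fin 2) ℂ) : Prop :=
  ∃ (m : ℕ) (p : Fin m → ℝ) (ρ σ : Fin m → Matrix (Fin 2) (Fin 2) ℂ),
    (∀ i, 0 ≤ p i) ∧ ∑ i, p i = 1 ∧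
    (∀ i, (ρ i).PosSemidef ∧ (ρ i).trace = 1) ∧
    (∀ i, (σ i).PosSemidef ∧ (σ i).trace = 1) ∧
    ω = ∑ i, ((p i : ℂ) • ((ρ i) ⊗ₖ (σ i)))

lemma s1 : (Real.sqrt 2)⁻¹ * Real.sin (Real.pi/4) = 1/2 := by
  rw [Real.sin_pi_div_four, div_eq_mul_inv, ← mul_assoc,
    inv_mul_cancel₀ (by positivity : Real.sqrt 2 ≠ 0)]
  norm_num

lemma s2 : Real.sin (Real.pi/4) ^ 2 = 1/2 := by
  rw [Real.sin_pi_div_four, div_pow, Real.sq_sqrt (by norm_num : (0:ℝ) ≤ 2)]; norm_num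

lemma c1 : (Real.sqrt 2)⁻¹ * Real.cos (Real.pi/4) = 1/2 := by
  rw [Real.cos_pi_div_four, div_eq_mul_inv, ← mul_assoc,
    inv_mul_cancel₀ (by positivity : Real.sqrt 2 ≠ 0)]
  norm_num

lemma c2 : Real.cos (Real.pi/4) ^ 2 = 1/2 := by
  rw [Real.cos_pi_div_four, div_pow, Real.sq_sqrt (by norm_num : (0:ℝ) ≤ 2)]; norm_num

/-- Explicit form of `omg (π/4)`. -/
lemma omg_pi_quarter : omg (Real.pi/4) = Matrix.of fun p q =>
    ((1/4 : ℂ) • !![1,0,0,1; 0,1,1,0; 0,1,1,0; 1,0,0,1]) (idx p.1 p.2) (idx q.1 q.2) := by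
  have e1 : (((Real.sqrt 2)⁻¹ * Real.sin (Real.pi/4) : ℝ) : ℂ) = 1/2 := by
    rw [s1]; norm_num
  have e2 : ((Real.sin (Real.pi/4) : ℝ) : ℂ) ^ 2 = 1/2 := by
    rw [← Complex.ofReal_pow, s2]; norm_num
  have e3 : (((Real.sqrt 2)⁻¹ * Real.cos (Real.pi/4) : ℝ) : ℂ) = 1/2 := by
    rw [c1]; norm_num
  have e4 : ((Real.cos (Real.pi/4) : ℝ) : ℂ) ^ 2 = 1/2 := by
    rw [← Complex.ofReal_pow, c2]; norm_num
  unfold omg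
  rw [e1, e2, e3, e4]
  ext ⟨i, k⟩ ⟨j, l⟩
  fin_cases i <;> fin_cases k <;> fin_cases j <;> fin_cases l <;>
    simp [idx] <;> norm_num

def ρp : Matrix (Fin 2) (Fin 2) ℂ := !![1/2, 1/2; 1/2, 1/2]
def ρm : Matrix (Fin 2) (Fin 2) ℂ := !![1/2, -(1/2); -(1/2), 1/2]

lemma ρp_psd : ρp.PosSemidef := by
  have : ρp = (!![1/2, 1/2; 1/2, 1/2] : Matrix (Fin 2) (Fin 2) ℂ)ᴴ * !![1/2, 1/2; 1/2, 1/2] := by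
    ext i j
    fin_cases i <;> fin_cases j <;>
      simp [ρp, Matrix.mul_apply, Fin.sum_univ_two, Matrix.conjTranspose_apply,
        Complex.ext_iff] <;> norm_num
  rw [this]; exact Matrix.posSemidef_conjTranspose_mul_self _

lemma ρm_psd : ρm.PosSemidef := by
  have : ρm = (!![1/2, -(1/2); -(1/2), 1/2] : Matrix (Fin 2) (Fin 2) ℂ)ᴴ *
      !![1/2, -(1/2); -(1/2), 1/2] := by
    ext i j
    fin_cases i <;> fin_cases j <;>
      simp [ρm, Matrix.mul_apply, Fin.sum_univ_two, Matrix.conjTranspose_apply,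
        Complex.ext_iff] <;> norm_num
  rw [this]; exact Matrix.posSemidef_conjTranspose_mul_self _

/-- The square-root factor of `omg (π/4)`. -/
def Mfac : Matrix (Fin 2 × Fin 2) (Fin 2 × Fin 2) ℂ :=
  Matrix.of fun p q =>
    if p = (0, 0) then (if q = (0, 0) ∨ q = (1, 1) then 1/2 else 0)
    else if p = (0, 1) then (if q = (0, 1) ∨ q = (1, 0) then 1/2 else 0)
    else 0

lemma omg_eq_fac : omg (Real.pi/4) = Mfacᴴ * Mfac := by
  rw [omg_pi_quarter]
  ext ⟨i, k⟩ ⟨j, l⟩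
  fin_cases i <;> fin_cases k <;> fin_cases j <;> fin_cases l <;>
    simp [idx, Mfac, Matrix.mul_apply, Fintype.sum_prod_type, Fin.sum_univ_two,
      Matrix.conjTranspose_apply, Prod.ext_iff, Complex.ext_iff] <;> norm_num

lemma omg_psd : (omg (Real.pi/4)).PosSemidef := by
  rw [omg_eq_fac]; exact Matrix.posSemidef_conjTranspose_mul_self _

lemma omg_decomp : omg (Real.pi/4) =
    ((1/2 : ℝ) : ℂ) • (ρp ⊗ₖ ρp) + ((1/2 : ℝ) : ℂ) • (ρm ⊗ₖ ρm) := by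
  rw [omg_pi_quarter]
  ext ⟨i, k⟩ ⟨j, l⟩
  fin_cases i <;> fin_cases k <;> fin_cases j <;> fin_cases l <;>
    simp [idx, ρp, ρm, Matrix.kroneckerMap_apply] <;> norm_num

lemma ptA_eq : ptA (omg (Real.pi/4)) = omg (Real.pi/4) := by
  conv_lhs => rw [omg_pi_quarter]
  rw [omg_pi_quarter]
  ext ⟨i, k⟩ ⟨j, l⟩
  fin_cases i <;> fin_cases k <;> fin_cases j <;> fin_cases l <;> simp [ptA, idx]

/-- The Choi state `ω(π/4)` of the selfcomplementary channel at
`θ = π/4, φ = 0` has positive semidefinite partial transpose and, being a two-qubit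
state (PPT ⟺ separable in 2⊗2), it is separable; hence the corresponding channel is
entanglement breaking. -/
theorem choi_at_pi_quarter_separable :
    (ptA (omg (Real.pi / 4))).PosSemidef ∧ SeparableState (omg (Real.pi / 4)) := by
  constructor
  · rw [ptA_eq]; exact omg_psd
  · refine ⟨2, ![1/2, 1/2], ![ρp, ρm], ![ρp, ρm], ?_, ?_, ?_, ?_, ?_⟩
    · intro i; fin_cases i <;> norm_num
    · simp [Fin.sum_univ_two]; norm_num
    · intro i; fin_cases i
      · exact ⟨ρp_psd, by simp [ρp, Matrix.trace_fin_two]; norm_num⟩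
      · exact ⟨ρm_psd, by simp [ρm, Matrix.trace_fin_two]; norm_num⟩
    · intro i; fin_cases i
      · exact ⟨ρp_psd, by simp [ρp, Matrix.trace_fin_two]; norm_num⟩
      · exact ⟨ρm_psd, by simp [ρm, Matrix.trace_fin_two]; norm_num⟩
    · rw [Fin.sum_univ_two]
      simpa using omg_decomp

end
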